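/- Let m ≥ 1, x_k = k/2^m, and y_k = φ₂(k) for k = 0,...,2^m−1. Then ∑_{k=0}^{2^m−1} x_k·y_k² = (2^m − 1)(4^{m+1} + 3·2^m(m−2) + 2)/(3·2^{2m+3}). -/

import Mathlib

/-- The base-2 digit reversal (radical inverse) function. -/
noncomputable def phi2 (k : ℕ) : ℝ :=
  ∑ i ∈ Finset.range (k + 1), if Nat.testBit k i then (1 : ℝ) / 2 ^ (i + 1) else 0

lemma phi2_eq (k n : ℕ) (h : k < n) :
    phi2 k = ∑ i ∈ Finset.range n, if Nat.testBit k i then (1 : ℝ) / 2 ^ (i + 1) else 0 := by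
  unfold phi2
  apply Finset.sum_subset
  · exact Finset.range_subset_range.2 h
  · intro i _ hi
    simp only [Finset.mem_range, not_lt] at hi
    have hb : k.testBit i = false :=
      Nat.testBit_lt_two_pow (lt_of_lt_of_le (Nat.lt_two_pow_self (n := k))
        (Nat.pow_le_pow_right (by norm_num) (by omega)))
    simp [hb]

lemma phi2_two_mul (j : ℕ) : phi2 (2 * j) = phi2 j / 2 := by
  rw [phi2_eq (2 * j) (2 * j + 2) (by omega), phi2_eq j (2 * j + 1) (by omega)]
  rw [Finset.sum_range_succ']
  have h0 : (2 * j).testBit 0 = false := by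
    simp [Nat.testBit_zero, Nat.mul_mod_right]
  simp only [h0, Bool.false_eq_true, if_false, add_zero]
  have hsum : ∀ i ∈ Finset.range (2 * j + 1),
      (if (2 * j).testBit (i + 1) then (1:ℝ) / 2 ^ (i + 1 + 1) else 0)
      = (if j.testBit i then (1:ℝ) / 2 ^ (i + 1) else 0) / 2 := by
    intro i _
    have ht : (2 * j).testBit (i + 1) = j.testBit i := by
      rw [Nat.testBit_succ, Nat.mul_div_cancel_left _ (by norm_num)]
    rw [ht]
    by_cases hb : j.testBit i <;> simp [hb] <;> ring
  rw [Finset.sum_congr rfl hsum, ← Finset.sum_div]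

lemma phi2_two_mul_add_one (j : ℕ) : phi2 (2 * j + 1) = 1 / 2 + phi2 j / 2 := by
  rw [phi2_eq (2 * j + 1) (2 * j + 2) (by omega), phi2_eq j (2 * j + 1) (by omega)]
  rw [Finset.sum_range_succ']
  have h0 : (2 * j + 1).testBit 0 = true := by
    simp [Nat.testBit_zero]
  simp only [h0, eq_self_iff_true, if_true]
  have hsum : ∀ i ∈ Finset.range (2 * j + 1),
      (if (2 * j + 1).testBit (i + 1) then (1:ℝ) / 2 ^ (i + 1 + 1) else 0)
      = (if j.testBit i then (1:ℝ) / 2 ^ (i + 1) else 0) / 2 := by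
    intro i _
    have ht : (2 * j + 1).testBit (i + 1) = j.testBit i := by
      rw [Nat.testBit_succ]
      congr 1
      omega
    rw [ht]
    by_cases hb : j.testBit i <;> simp [hb] <;> ring
  rw [Finset.sum_congr rfl hsum, ← Finset.sum_div]
  norm_num
  ring

lemma sum_range_two_mul (f : ℕ → ℝ) (n : ℕ) :
    ∑ k ∈ Finset.range (2 * n), f k = ∑ j ∈ Finset.range n, (f (2 * j) + f (2 * j + 1)) := by
  induction n with
  | zero => simp
  | succ n ih =>
    have h : 2 * (n + 1) = (2 * n + 1) + 1 := by ring
    rw [h, Finset.sum_range_succ, Finset.sum_range_succ, Finset.sum_range_succ, ih, add_assoc]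

lemma sum_range_cast (n : ℕ) : ∑ k ∈ Finset.range n, (k : ℝ) = (n : ℝ) * ((n : ℝ) - 1) / 2 := by
  induction n with
  | zero => simp
  | succ n ih =>
    rw [Finset.sum_range_succ, ih]
    push_cast
    ring

lemma main_sums (m : ℕ) :
    (∑ k ∈ Finset.range (2 ^ m), phi2 k = ((2:ℝ) ^ m - 1) / 2) ∧
    (∑ k ∈ Finset.range (2 ^ m), (phi2 k) ^ 2
        = (2:ℝ) ^ m / 3 - 1 / 2 + 1 / (6 * 2 ^ m)) ∧
    (∑ k ∈ Finset.range (2 ^ m), (k : ℝ) * phi2 k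
        = (4:ℝ) ^ m / 4 + (m : ℝ) * 2 ^ m / 8 - 2 ^ m / 2 + 1 / 4) ∧
    (∑ k ∈ Finset.range (2 ^ m), (k : ℝ) * (phi2 k) ^ 2
        = (4:ℝ) ^ m / 6 + ((m : ℝ) - 2) * 2 ^ m / 8 - 2 ^ m / 6 - (m : ℝ) / 8 + 1 / 3
          - 1 / (12 * 2 ^ m)) := by
  induction m with
  | zero =>
    have h0 : phi2 0 = 0 := by simp [phi2]
    refine ⟨?_, ?_, ?_, ?_⟩ <;> simp [h0] <;> norm_num
  | succ m ih =>
    obtain ⟨hA, hB, hC, hD⟩ := ih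
    have hpow : (2:ℕ) ^ (m + 1) = 2 * 2 ^ m := by rw [pow_succ]; ring
    have hN : (0:ℝ) < 2 ^ m := by positivity
    have hT : ∑ k ∈ Finset.range (2 ^ m), (k : ℝ) = (2:ℝ) ^ m * ((2:ℝ) ^ m - 1) / 2 := by
      rw [sum_range_cast]; push_cast; ring
    have h4 : ∀ n : ℕ, (4:ℝ) ^ n = (2:ℝ) ^ n * 2 ^ n := by
      intro n; rw [show (4:ℝ) = 2 * 2 by norm_num, mul_pow]
    refine ⟨?_, ?_, ?_, ?_⟩
    · rw [hpow, sum_range_two_mul]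
      have h : ∀ j ∈ Finset.range (2 ^ m), phi2 (2 * j) + phi2 (2 * j + 1)
          = phi2 j + 1 / 2 := by
        intro j _; rw [phi2_two_mul, phi2_two_mul_add_one]; ring
      rw [Finset.sum_congr rfl h, Finset.sum_add_distrib, hA,
        Finset.sum_const, Finset.card_range, nsmul_eq_mul]
      push_cast
      ring
    · rw [hpow, sum_range_two_mul]
      have h : ∀ j ∈ Finset.range (2 ^ m), (phi2 (2 * j)) ^ 2 + (phi2 (2 * j + 1)) ^ 2
          = (phi2 j) ^ 2 / 2 + phi2 j / 2 + 1 / 4 := by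
        intro j _; rw [phi2_two_mul, phi2_two_mul_add_one]; ring
      rw [Finset.sum_congr rfl h, Finset.sum_add_distrib, Finset.sum_add_distrib,
        ← Finset.sum_div, ← Finset.sum_div, hA, hB, Finset.sum_const, Finset.card_range,
        nsmul_eq_mul]
      push_cast
      field_simp
      ring
    · rw [hpow, sum_range_two_mul]
      have h : ∀ j ∈ Finset.range (2 ^ m),
          ((2 * j : ℕ) : ℝ) * phi2 (2 * j) + ((2 * j + 1 : ℕ) : ℝ) * phi2 (2 * j + 1)
          = 2 * ((j : ℝ) * phi2 j) + (j : ℝ) + phi2 j / 2 + 1 / 2 := by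
        intro j _; rw [phi2_two_mul, phi2_two_mul_add_one]; push_cast; ring
      rw [Finset.sum_congr rfl h]
      simp only [Finset.sum_add_distrib]
      rw [← Finset.mul_sum, ← Finset.sum_div, hA, hC, hT, Finset.sum_const,
        Finset.card_range, nsmul_eq_mul]
      push_cast
      simp only [h4]
      field_simp
      ring
    · rw [hpow, sum_range_two_mul]
      have h : ∀ j ∈ Finset.range (2 ^ m),
          ((2 * j : ℕ) : ℝ) * (phi2 (2 * j)) ^ 2
            + ((2 * j + 1 : ℕ) : ℝ) * (phi2 (2 * j + 1)) ^ 2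
          = (j : ℝ) * (phi2 j) ^ 2 + (j : ℝ) * phi2 j + (j : ℝ) / 2 + (phi2 j) ^ 2 / 4
            + phi2 j / 2 + 1 / 4 := by
        intro j _; rw [phi2_two_mul, phi2_two_mul_add_one]; push_cast; ring
      rw [Finset.sum_congr rfl h]
      simp only [Finset.sum_add_distrib]
      rw [← Finset.sum_div, ← Finset.sum_div, ← Finset.sum_div, hA, hB, hC, hD, hT,
        Finset.sum_const, Finset.card_range, nsmul_eq_mul]
      push_cast
      simp only [h4]
      field_simp
      ring

theorem hammersley_S4 (m : ℕ) (hm : 1 ≤ m) :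
    ∑ k ∈ Finset.range (2 ^ m), ((k : ℝ) / 2 ^ m) * (phi2 k) ^ 2
      = ((2:ℝ) ^ m - 1) * ((4:ℝ) ^ (m + 1) + 3 * 2 ^ m * ((m : ℝ) - 2) + 2)
        / (3 * 2 ^ (2 * m + 3)) := by
  obtain ⟨-, -, -, hD⟩ := main_sums m
  have h1 : ∀ k ∈ Finset.range (2 ^ m), ((k : ℝ) / 2 ^ m) * (phi2 k) ^ 2
      = ((k : ℝ) * (phi2 k) ^ 2) / 2 ^ m := by
    intro k _; ring
  rw [Finset.sum_congr rfl h1, ← Finset.sum_div, hD]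
  have hN : (0:ℝ) < 2 ^ m := by positivity
  have h4 : (4:ℝ) ^ m = (2 ^ m) ^ 2 := by
    rw [show (4:ℝ) = 2 ^ 2 by norm_num, ← pow_mul, mul_comm, pow_mul]
  have h4' : (4:ℝ) ^ (m + 1) = 4 * (2 ^ m) ^ 2 := by rw [pow_succ, h4]; ring
  have h2 : (2:ℝ) ^ (2 * m + 3) = 8 * (2 ^ m) ^ 2 := by
    rw [pow_add, mul_comm 2 m, pow_mul]; ring
  rw [h4, h4', h2]
  field_simp
  ring
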